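/- Let D be the digraph on vertex set {u,v,w,z,x} ∪ A ∪ B (A, B disjoint sets of extra vertices, possibly empty) whose arcs are exactly those of the 4-cycles (u,v,w,z,u) and (u,v,w,x,u), together with w→a and a→u for every a∈A, and u→b and b→w for every b∈B. Then D is strongly connected of girth 4 but D is not λ'-connected. -/

import Mathlib

/-- A digraph on vertex type `V`, given by its adjacency (arc) relation. -/
structure Digr (V : Type) where
  Adj : V → V → Prop

namespace Digr

variable {V : Type}

/-- Reachability by directed paths. -/
def Reach (D : Digr V) : V → V → Prop := Relation.ReflTransGen D.Adj

/-- A digraph is strongly connected if every vertex reaches every other. -/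
def StronglyConnected (D : Digr V) : Prop := ∀ u v : V, D.Reach u v

/-- An oriented graph: no loops and no pair of opposite arcs. -/
def Oriented (D : Digr V) : Prop := ∀ u v : V, D.Adj u v → ¬ D.Adj v u

/-- The digraph contains at least one arc. -/
def HasArc (D : Digr V) : Prop := ∃ u v : V, D.Adj u v

/-- Delete a set of arcs. -/
def delArcs (D : Digr V) (S : Set (V × V)) : Digr V :=
  ⟨fun a b => D.Adj a b ∧ (a, b) ∉ S⟩

/-- Delete a set of vertices (keep arcs avoiding them). -/
def delVerts (D : Digr V) (X : Set V) : Digr V :=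
  ⟨fun a b => D.Adj a b ∧ a ∉ X ∧ b ∉ X⟩

/-- Induced subdigraph on a vertex set. -/
def induce (D : Digr V) (X : Set V) : Digr V :=
  ⟨fun a b => a ∈ X ∧ b ∈ X ∧ D.Adj a b⟩

/-- The induced subdigraph on `X` is strongly connected. -/
def StronglyConnectedOn (D : Digr V) (X : Set V) : Prop :=
  ∀ u ∈ X, ∀ v ∈ X, (D.induce X).Reach u v

/-- Mutual reachability. -/
def MReach (D : Digr V) (u v : V) : Prop := D.Reach u v ∧ D.Reach v u

/-- `X` is a strong component: an equivalence class of mutual reachability. -/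
def IsStrongComponent (D : Digr V) (X : Set V) : Prop :=
  ∃ x : V, X = {y | D.MReach x y}

/-- `S` is a restricted arc-cut: a set of arcs whose deletion leaves a
non-trivial strong component `X` (containing an arc) such that deleting the
vertices of `X` from `D` leaves an arc. -/
def IsRestrictedArcCut (D : Digr V) (S : Set (V × V)) : Prop :=
  (∀ p ∈ S, D.Adj p.1 p.2) ∧
  ∃ X : Set V, (D.delArcs S).IsStrongComponent X ∧
    (∃ u ∈ X, ∃ v ∈ X, (D.delArcs S).Adj u v) ∧
    (D.delVerts X).HasArc

/-- A digraph is λ'-connected if it admits a restricted arc-cut. -/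
def LambdaPrimeConnected (D : Digr V) : Prop :=
  ∃ S : Set (V × V), D.IsRestrictedArcCut S

/-- λ'(D): minimum size of a restricted arc-cut. -/
noncomputable def lambdaPrime (D : Digr V) [Fintype V] : ℕ :=
  sInf {n : ℕ | ∃ S : Finset (V × V), D.IsRestrictedArcCut ↑S ∧ S.card = n}

/-- λ(D): the arc-connectivity, the minimum size of an arc set whose removal
destroys strong connectivity. -/
noncomputable def lambda (D : Digr V) [Fintype V] : ℕ :=
  sInf {n : ℕ | ∃ S : Finset (V × V), (∀ p ∈ S, D.Adj p.1 p.2) ∧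
    ¬ (D.delArcs ↑S).StronglyConnected ∧ S.card = n}

/-- The list `l` of distinct vertices forms a directed cycle. -/
def IsCycleList (D : Digr V) (l : List V) : Prop :=
  ∃ h : l ≠ [], l.Nodup ∧ l.Chain' D.Adj ∧ D.Adj (l.getLast h) (l.head h)

/-- The girth: minimum length of a directed cycle. -/
noncomputable def girth (D : Digr V) : ℕ :=
  sInf {n : ℕ | ∃ l : List V, D.IsCycleList l ∧ l.length = n}

/-- `(u,v,w,z,u)` is a 4-cycle of `D`. -/
def Cycle4 (D : Digr V) (u v w z : V) : Prop := D.IsCycleList [u, v, w, z]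

/-- Out-degree. -/
def outDeg (D : Digr V) [Fintype V] [DecidableRel D.Adj] (v : V) : ℕ :=
  (Finset.univ.filter fun w => D.Adj v w).card

/-- In-degree. -/
def inDeg (D : Digr V) [Fintype V] [DecidableRel D.Adj] (v : V) : ℕ :=
  (Finset.univ.filter fun w => D.Adj w v).card

/-- ξ(D): minimum over girth cycles `C` of
`min (Σ d⁺ − g, Σ d⁻ − g)`. -/
noncomputable def xi (D : Digr V) [Fintype V] [DecidableRel D.Adj] : ℤ :=
  sInf {k : ℤ | ∃ l : List V, D.IsCycleList l ∧ l.length = D.girth ∧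
    k = min (((l.map D.outDeg).sum : ℤ) - (D.girth : ℤ))
            (((l.map D.inDeg).sum : ℤ) - (D.girth : ℤ))}

/-- ∂⁺(X): the set of arcs from `X` to its complement. -/
noncomputable def outBoundary (D : Digr V) [Fintype V] (X : Set V) : Finset (V × V) :=
  (Set.toFinite {p : V × V | p.1 ∈ X ∧ p.2 ∉ X ∧ D.Adj p.1 p.2}).toFinset

/-- ∂⁻(X): the set of arcs from the complement of `X` into `X`. -/
noncomputable def inBoundary (D : Digr V) [Fintype V] (X : Set V) : Finset (V × V) :=
  (Set.toFinite {p : V × V | p.1 ∉ X ∧ p.2 ∈ X ∧ D.Adj p.1 p.2}).toFinset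

/-- The list of arcs of a cycle given as a vertex list. -/
def cycleArcs (l : List V) : List (V × V) := l.zip (l.rotate 1)

end Digr
private lemma reach_le_of_lt {V : Type} {R : V → V → Prop} (g : V → ℕ)
    (hg : ∀ a b, R a b → g a < g b) {s t : V} (h : Relation.ReflTransGen R s t) :
    g s ≤ g t := by
  induction h with
  | refl => exact le_refl _
  | tail _ hbc ih => exact ih.trans (hg _ _ hbc).le

private lemma reach_split {V : Type} {R : V → V → Prop} (u : V) {s t : V}
    (h : Relation.ReflTransGen R s t) :
    (Relation.ReflTransGen R s u ∧ Relation.ReflTransGen R u t) ∨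
    Relation.ReflTransGen (fun a b => R a b ∧ a ≠ u ∧ b ≠ u) s t := by
  induction h with
  | refl => exact Or.inr .refl
  | @tail b c hsb hbc ih =>
    rcases ih with ⟨h1, h2⟩ | hw
    · exact Or.inl ⟨h1, h2.tail hbc⟩
    · by_cases hc : c = u
      · subst hc
        exact Or.inl ⟨(show Relation.ReflTransGen R s b from Relation.ReflTransGen.mono (fun a b (h : R a b ∧ a ≠ c ∧ b ≠ c) => h.1) s b hw).tail hbc, .refl⟩
      · by_cases hb : b = u
        · rcases hw.cases_tail with heq | ⟨m, _, hm⟩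
          · exact Or.inl ⟨heq ▸ hb ▸ Relation.ReflTransGen.refl,
              Relation.ReflTransGen.single (hb ▸ hbc)⟩
          · exact absurd hb hm.2.2
        · exact Or.inr (hw.tail ⟨hbc, hb, hc⟩)

private lemma chain_count {V : Type} {R : V → V → Prop} (f : V → ZMod 4)
    (hf : ∀ a b, R a b → f b = f a + 1) :
    ∀ (l : List V) (h : l ≠ []), l.Chain' R →
      f (l.getLast h) = f (l.head h) + ((l.length - 1 : ℕ) : ZMod 4) := by
  intro l
  induction l with
  | nil => intro h; exact absurd rfl h
  | cons a t ih =>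
    intro h hc
    cases t with
    | nil => simp
    | cons b t' =>
      have hc' := List.isChain_cons_cons.mp hc
      have hih := ih (by simp) hc'.2
      rw [List.getLast_cons (by simp : (b :: t') ≠ [])]
      rw [hih]
      simp only [List.head_cons, List.length_cons, Nat.succ_sub_one]
      rw [hf a b hc'.1]
      push_cast
      ring

set_option maxHeartbeats 1000000 in
/-- A member of the family H₂ is strongly connected of girth 4 but
not λ'-connected. -/
theorem stmt6 {V : Type} (D : Digr V) (u v w z x : V) (A B : Set V)
    (hnd : [u, v, w, z, x].Nodup)
    (hdisj : ∀ t ∈ A ∪ B, t ∉ ({u, v, w, z, x} : Set V))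
    (hAB : Disjoint A B)
    (hcov : ∀ t : V, t ∈ ({u, v, w, z, x} : Set V) ∪ A ∪ B)
    (hAdj : ∀ p q : V, D.Adj p q ↔
      (p = u ∧ q = v) ∨ (p = v ∧ q = w) ∨ (p = w ∧ q = z) ∨ (p = z ∧ q = u) ∨
      (p = w ∧ q = x) ∨ (p = x ∧ q = u) ∨
      (p = w ∧ q ∈ A) ∨ (p ∈ A ∧ q = u) ∨
      (p = u ∧ q ∈ B) ∨ (p ∈ B ∧ q = w)) :
    D.StronglyConnected ∧ D.girth = 4 ∧ ¬ D.LambdaPrimeConnected := by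
  classical
  simp only [List.nodup_cons, List.mem_cons, List.not_mem_nil, or_false, not_or,
    List.nodup_nil, and_true] at hnd
  obtain ⟨⟨huv, huw, huz, hux⟩, ⟨hvw, hvz, hvx⟩, ⟨hwz, hwx⟩, ⟨hzx, -⟩⟩ := hnd
  have hAmem : ∀ t ∈ A, t ≠ u ∧ t ≠ v ∧ t ≠ w ∧ t ≠ z ∧ t ≠ x ∧ t ∉ B := by
    intro t ht
    have h := hdisj t (Or.inl ht)
    simp only [Set.mem_insert_iff, Set.mem_singleton_iff, not_or] at h
    exact ⟨h.1, h.2.1, h.2.2.1, h.2.2.2.1, h.2.2.2.2, fun hb => Set.disjoint_left.mp hAB ht hb⟩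
  have hBmem : ∀ t ∈ B, t ≠ u ∧ t ≠ v ∧ t ≠ w ∧ t ≠ z ∧ t ≠ x ∧ t ∉ A := by
    intro t ht
    have h := hdisj t (Or.inr ht)
    simp only [Set.mem_insert_iff, Set.mem_singleton_iff, not_or] at h
    exact ⟨h.1, h.2.1, h.2.2.1, h.2.2.2.1, h.2.2.2.2, fun ha => Set.disjoint_left.mp hAB ha ht⟩
  have auv : D.Adj u v := (hAdj u v).mpr (Or.inl ⟨rfl, rfl⟩)
  have avw : D.Adj v w := (hAdj v w).mpr (Or.inr (Or.inl ⟨rfl, rfl⟩))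
  have awz : D.Adj w z := (hAdj w z).mpr (Or.inr (Or.inr (Or.inl ⟨rfl, rfl⟩)))
  have azu : D.Adj z u := (hAdj z u).mpr (Or.inr (Or.inr (Or.inr (Or.inl ⟨rfl, rfl⟩))))
  have awx : D.Adj w x := (hAdj w x).mpr
    (Or.inr (Or.inr (Or.inr (Or.inr (Or.inl ⟨rfl, rfl⟩)))))
  have axu : D.Adj x u := (hAdj x u).mpr
    (Or.inr (Or.inr (Or.inr (Or.inr (Or.inr (Or.inl ⟨rfl, rfl⟩))))))
  have awA : ∀ t ∈ A, D.Adj w t := fun t ht => (hAdj w t).mpr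
    (Or.inr (Or.inr (Or.inr (Or.inr (Or.inr (Or.inr (Or.inl ⟨rfl, ht⟩)))))))
  have aAu : ∀ t ∈ A, D.Adj t u := fun t ht => (hAdj t u).mpr
    (Or.inr (Or.inr (Or.inr (Or.inr (Or.inr (Or.inr (Or.inr (Or.inl ⟨ht, rfl⟩))))))))
  have auB : ∀ t ∈ B, D.Adj u t := fun t ht => (hAdj u t).mpr
    (Or.inr (Or.inr (Or.inr (Or.inr (Or.inr (Or.inr (Or.inr (Or.inr (Or.inl ⟨rfl, ht⟩)))))))))
  have aBw : ∀ t ∈ B, D.Adj t w := fun t ht => (hAdj t w).mpr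
    (Or.inr (Or.inr (Or.inr (Or.inr (Or.inr (Or.inr (Or.inr (Or.inr (Or.inr ⟨ht, rfl⟩)))))))))
  -- strong connectivity
  have rwu : D.Reach w u := Relation.ReflTransGen.head awz (Relation.ReflTransGen.single azu)
  have ruw : D.Reach u w := Relation.ReflTransGen.head auv (Relation.ReflTransGen.single avw)
  have to_u : ∀ t, D.Reach t u := by
    intro t
    rcases hcov t with (ht | htA) | htB
    · simp only [Set.mem_insert_iff, Set.mem_singleton_iff] at ht
      rcases ht with rfl | rfl | rfl | rfl | rfl
      · exact Relation.ReflTransGen.refl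
      · exact Relation.ReflTransGen.head avw rwu
      · exact rwu
      · exact Relation.ReflTransGen.single azu
      · exact Relation.ReflTransGen.single axu
    · exact Relation.ReflTransGen.single (aAu t htA)
    · exact Relation.ReflTransGen.head (aBw t htB) rwu
  have from_u : ∀ t, D.Reach u t := by
    intro t
    rcases hcov t with (ht | htA) | htB
    · simp only [Set.mem_insert_iff, Set.mem_singleton_iff] at ht
      rcases ht with rfl | rfl | rfl | rfl | rfl
      · exact Relation.ReflTransGen.refl
      · exact Relation.ReflTransGen.single auv
      · exact ruw
      · exact ruw.tail awz
      · exact ruw.tail awx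
    · exact ruw.tail (awA t htA)
    · exact Relation.ReflTransGen.single (auB t htB)
  have hSC : D.StronglyConnected := fun s t => (to_u s).trans (from_u t)
  refine ⟨hSC, ?_, ?_⟩
  -- girth = 4
  · set f : V → ZMod 4 := fun t =>
      if t = u then 0 else if t = v then 1 else if t = w then 2 else
      if t = z then 3 else if t = x then 3 else if t ∈ A then 3 else 1 with hfdef
    have fu : f u = 0 := by simp only [hfdef]; simp
    have fv : f v = 1 := by simp only [hfdef]; simp [(Ne.symm huv)]
    have fw : f w = 2 := by simp only [hfdef]; simp [(Ne.symm huw), (Ne.symm hvw)]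
    have fz : f z = 3 := by simp only [hfdef]; simp [(Ne.symm huz), (Ne.symm hvz), (Ne.symm hwz)]
    have fx : f x = 3 := by simp only [hfdef]; simp [(Ne.symm hux), (Ne.symm hvx), (Ne.symm hwx), (Ne.symm hzx)]
    have fA : ∀ t ∈ A, f t = 3 := by
      intro t ht
      obtain ⟨h1, h2, h3, h4, h5, _⟩ := hAmem t ht
      simp only [hfdef]; simp [h1, h2, h3, h4, h5, ht]
    have fB : ∀ t ∈ B, f t = 1 := by
      intro t ht
      obtain ⟨h1, h2, h3, h4, h5, h6⟩ := hBmem t ht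
      simp only [hfdef]; simp [h1, h2, h3, h4, h5, h6]
    have hf : ∀ a b, D.Adj a b → f b = f a + 1 := by
      intro a b hab
      rcases (hAdj a b).mp hab with ⟨rfl, rfl⟩ | ⟨rfl, rfl⟩ | ⟨rfl, rfl⟩ | ⟨rfl, rfl⟩ |
        ⟨rfl, rfl⟩ | ⟨rfl, rfl⟩ | ⟨rfl, hb⟩ | ⟨ha, rfl⟩ | ⟨rfl, hb⟩ | ⟨ha, rfl⟩
      · rw [fu, fv]; decide
      · rw [fv, fw]; decide
      · rw [fw, fz]; decide
      · rw [fz, fu]; decide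
      · rw [fw, fx]; decide
      · rw [fx, fu]; decide
      · rw [fw, fA b hb]; decide
      · rw [fA a ha, fu]; decide
      · rw [fu, fB b hb]; decide
      · rw [fB a ha, fw]; decide
    have h4 : (4 : ℕ) ∈ {n : ℕ | ∃ l : List V, D.IsCycleList l ∧ l.length = n} := by
      refine ⟨[u, v, w, z], ⟨by simp, ?_, ?_, ?_⟩, rfl⟩
      · simp [huv, huw, huz, hvw, hvz, hwz]
      · exact List.isChain_cons_cons.mpr ⟨auv, List.isChain_cons_cons.mpr ⟨avw,
          List.isChain_cons_cons.mpr ⟨awz, List.isChain_singleton _⟩⟩⟩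
      · simpa using azu
    have hlb : ∀ n ∈ {n : ℕ | ∃ l : List V, D.IsCycleList l ∧ l.length = n}, 4 ≤ n := by
      rintro n ⟨l, ⟨hne', hndl, hch, hlast⟩, rfl⟩
      have h1 := chain_count f hf l hne' hch
      have h2 : f (l.head hne') = f (l.getLast hne') + 1 := hf _ _ hlast
      rw [h1] at h2
      rw [add_assoc] at h2
      have h3 : ((l.length - 1 : ℕ) : ZMod 4) + 1 = 0 := left_eq_add.mp h2
      have hlen : 1 ≤ l.length := List.length_pos_iff.mpr hne'
      have key : (l.length : ZMod 4) = 0 := by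
        have : ((l.length - 1 + 1 : ℕ) : ZMod 4) = 0 := by push_cast; exact h3
        rwa [Nat.sub_add_cancel hlen] at this
      have hdvd : 4 ∣ l.length := (ZMod.natCast_eq_zero_iff _ 4).mp key
      exact Nat.le_of_dvd (by omega) hdvd
    exact Nat.le_antisymm (Nat.sInf_le h4) (le_csInf ⟨4, h4⟩ hlb)
  -- not lambda'-connected
  · rintro ⟨S, hSsub, X, ⟨x₀, rfl⟩, ⟨p, hp, q, hq, hpq⟩, a, b, hab⟩
    replace hp : (D.delArcs S).MReach x₀ p := hp
    replace hq : (D.delArcs S).MReach x₀ q := hq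
    have hpq' : D.Adj p q := hpq.1
    -- potential avoiding u
    set gU : V → ℕ := fun t => if t = v then 1 else if t = w then 2 else
      if t ∈ B then 1 else 3 with hgUdef
    have hzB : z ∉ B := fun hb => (hBmem z hb).2.2.2.1 rfl
    have hxB : x ∉ B := fun hb => (hBmem x hb).2.2.2.2.1 rfl
    have gUv : gU v = 1 := by simp only [hgUdef]; simp
    have gUw : gU w = 2 := by simp only [hgUdef]; simp [(Ne.symm hvw)]
    have gUz : gU z = 3 := by
      simp only [hgUdef]; simp [(Ne.symm hvz), (Ne.symm hwz), hzB]
    have gUx : gU x = 3 := by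
      simp only [hgUdef]; simp [(Ne.symm hvx), (Ne.symm hwx), hxB]
    have gUA : ∀ t ∈ A, gU t = 3 := by
      intro t ht
      obtain ⟨_, h2, h3, _, _, h6⟩ := hAmem t ht
      simp only [hgUdef]; simp [h2, h3, h6]
    have gUB : ∀ t ∈ B, gU t = 1 := by
      intro t ht
      obtain ⟨_, h2, h3, _, _, _⟩ := hBmem t ht
      simp only [hgUdef]; simp [h2, h3, ht]
    have hgU : ∀ s t, ((D.delArcs S).Adj s t ∧ s ≠ u ∧ t ≠ u) → gU s < gU t := by
      rintro s t ⟨hst, hsu, htu⟩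
      rcases (hAdj s t).mp hst.1 with ⟨rfl, rfl⟩ | ⟨rfl, rfl⟩ | ⟨rfl, rfl⟩ | ⟨rfl, rfl⟩ |
        ⟨rfl, rfl⟩ | ⟨rfl, rfl⟩ | ⟨rfl, hb⟩ | ⟨ha, rfl⟩ | ⟨rfl, hb⟩ | ⟨ha, rfl⟩
      · exact absurd rfl hsu
      · rw [gUv, gUw]; omega
      · rw [gUw, gUz]; omega
      · exact absurd rfl htu
      · rw [gUw, gUx]; omega
      · exact absurd rfl htu
      · rw [gUw, gUA _ hb]; omega
      · exact absurd rfl htu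
      · exact absurd rfl hsu
      · rw [gUB _ ha, gUw]; omega
    have hu' : (D.delArcs S).MReach x₀ u := by
      by_cases hpu : p = u
      · exact hpu ▸ hp
      by_cases hqu : q = u
      · exact hqu ▸ hq
      have hqp : (D.delArcs S).Reach q p := hq.2.trans hp.1
      rcases reach_split u hqp with ⟨h1, h2⟩ | hw'
      · exact ⟨hq.1.trans h1, h2.trans hp.2⟩
      · exfalso
        have hle := reach_le_of_lt gU (fun a b h => hgU a b h) hw'
        have hlt := hgU p q ⟨hpq, hpu, hqu⟩
        omega
    -- potential avoiding w
    set gW : V → ℕ := fun t => if t = u then 1 else if t = v then 2 else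
      if t ∈ B then 2 else 0 with hgWdef
    have gWu : gW u = 1 := by simp only [hgWdef]; simp
    have gWv : gW v = 2 := by simp only [hgWdef]; simp [(Ne.symm huv)]
    have gWz : gW z = 0 := by
      simp only [hgWdef]; simp [(Ne.symm huz), (Ne.symm hvz), hzB]
    have gWx : gW x = 0 := by
      simp only [hgWdef]; simp [(Ne.symm hux), (Ne.symm hvx), hxB]
    have gWA : ∀ t ∈ A, gW t = 0 := by
      intro t ht
      obtain ⟨h1, h2, _, _, _, h6⟩ := hAmem t ht
      simp only [hgWdef]; simp [h1, h2, h6]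
    have gWB : ∀ t ∈ B, gW t = 2 := by
      intro t ht
      obtain ⟨h1, h2, _, _, _, _⟩ := hBmem t ht
      simp only [hgWdef]; simp [h1, h2, ht]
    have hgW : ∀ s t, ((D.delArcs S).Adj s t ∧ s ≠ w ∧ t ≠ w) → gW s < gW t := by
      rintro s t ⟨hst, hsw, htw⟩
      rcases (hAdj s t).mp hst.1 with ⟨rfl, rfl⟩ | ⟨rfl, rfl⟩ | ⟨rfl, rfl⟩ | ⟨rfl, rfl⟩ |
        ⟨rfl, rfl⟩ | ⟨rfl, rfl⟩ | ⟨rfl, hb⟩ | ⟨ha, rfl⟩ | ⟨rfl, hb⟩ | ⟨ha, rfl⟩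
      · rw [gWu, gWv]; omega
      · exact absurd rfl htw
      · exact absurd rfl hsw
      · rw [gWz, gWu]; omega
      · exact absurd rfl hsw
      · rw [gWx, gWu]; omega
      · exact absurd rfl hsw
      · rw [gWA _ ha, gWu]; omega
      · rw [gWu, gWB _ hb]; omega
      · exact absurd rfl htw
    have hw2 : (D.delArcs S).MReach x₀ w := by
      by_cases hpw : p = w
      · exact hpw ▸ hp
      by_cases hqw : q = w
      · exact hqw ▸ hq
      have hqp : (D.delArcs S).Reach q p := hq.2.trans hp.1
      rcases reach_split w hqp with ⟨h1, h2⟩ | hw'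
      · exact ⟨hq.1.trans h1, h2.trans hp.2⟩
      · exfalso
        have hle := reach_le_of_lt gW (fun a b h => hgW a b h) hw'
        have hlt := hgW p q ⟨hpq, hpw, hqw⟩
        omega
    -- every arc meets u or w
    obtain ⟨habD, haX, hbX⟩ := hab
    rcases (hAdj a b).mp habD with ⟨rfl, rfl⟩ | ⟨rfl, rfl⟩ | ⟨rfl, rfl⟩ | ⟨rfl, rfl⟩ |
      ⟨rfl, rfl⟩ | ⟨rfl, rfl⟩ | ⟨rfl, hbm⟩ | ⟨ham, rfl⟩ | ⟨rfl, hbm⟩ | ⟨ham, rfl⟩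
    · exact haX hu'
    · exact hbX hw2
    · exact haX hw2
    · exact hbX hu'
    · exact haX hw2
    · exact hbX hu'
    · exact haX hw2
    · exact hbX hu'
    · exact haX hu'
    · exact hbX hw2
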